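/- Every element f of T_B is given on each of its intervals of linearity by a map of the form θ ↦ 2^j·θ + d (mod 1) for some integer j and some dyadic rational d (a rational of the form m/2^p with m, p ∈ ℤ). -/

import Mathlib

noncomputable section

open Set

/-- The circle `S¹ = ℝ/ℤ`. -/
abbrev Circle1 := AddCircle (1 : ℝ)

/-- `F` is affine on the closed interval `[u, v]`. -/
def AffineOn (F : ℝ → ℝ) (u v : ℝ) : Prop :=
  ∃ a b : ℝ, ∀ x ∈ Set.Icc u v, F x = a * x + b

/-- `F : ℝ → ℝ` is a lift of a piecewise-linear homeomorphism of the circle: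
continuous, strictly increasing, commutes with translation by 1, and affine on each
interval of some finite partition of `[0,1]`. -/
def IsPLLift (F : ℝ → ℝ) : Prop :=
  Continuous F ∧ StrictMono F ∧ (∀ x : ℝ, F (x + 1) = F x + 1) ∧
    ∃ (m : ℕ) (t : Fin (m + 1) → ℝ), t 0 = 0 ∧ t (Fin.last m) = 1 ∧ StrictMono t ∧
      ∀ i : Fin m, AffineOn F (t i.castSucc) (t i.succ)

/-- The lift `F : ℝ → ℝ` induces the circle map `f`. -/
def InducedBy (f : Equiv.Perm Circle1) (F : ℝ → ℝ) : Prop :=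
  ∀ x : ℝ, f (x : Circle1) = ((F x : ℝ) : Circle1)

/-- `f` is an (orientation-preserving) piecewise-linear homeomorphism of the circle. -/
def IsPLHomeo (f : Equiv.Perm Circle1) : Prop :=
  ∃ F : ℝ → ℝ, IsPLLift F ∧ InducedBy f F

/-- `F` has right slope `a` at `x`. -/
def HasRightSlope (F : ℝ → ℝ) (x a : ℝ) : Prop :=
  ∃ ε > (0 : ℝ), ∀ y ∈ Set.Icc x (x + ε), F y = F x + a * (y - x)

/-- `F` has left slope `a` at `x`. -/
def HasLeftSlope (F : ℝ → ℝ) (x a : ℝ) : Prop :=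
  ∃ ε > (0 : ℝ), ∀ y ∈ Set.Icc (x - ε) x, F y = F x + a * (y - x)

/-- `x` is a breakpoint of the lift `F`: the left and right slopes at `x` differ. -/
def LiftBreakpointAt (F : ℝ → ℝ) (x : ℝ) : Prop :=
  ∃ a b : ℝ, HasLeftSlope F x a ∧ HasRightSlope F x b ∧ a ≠ b

/-- `p ∈ S¹` is a breakpoint of the PL circle homeomorphism `f`. -/
def IsBreakpoint (f : Equiv.Perm Circle1) (p : Circle1) : Prop :=
  ∃ (F : ℝ → ℝ) (x : ℝ), IsPLLift F ∧ InducedBy f F ∧ (x : Circle1) = p ∧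
    LiftBreakpointAt F x

/-- `s` is a slope of one of the affine pieces of (a lift of) `f`. -/
def IsSlope (f : Equiv.Perm Circle1) (s : ℝ) : Prop :=
  ∃ (F : ℝ → ℝ) (x : ℝ), IsPLLift F ∧ InducedBy f F ∧ HasRightSlope F x s

/-- The unordered pair `{a, b}` is an arc of the Basilica lamination, i.e. equals
`{(3k-1)/(3·2ⁿ) mod 1, (3k+1)/(3·2ⁿ) mod 1}` for some `k ∈ ℤ`, `n ≥ 0`. -/
def IsArc (a b : Circle1) : Prop :=
  ∃ (k : ℤ) (n : ℕ),
    ({a, b} : Set Circle1) =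
      {(((3 * (k : ℝ) - 1) / (3 * 2 ^ n) : ℝ) : Circle1),
       (((3 * (k : ℝ) + 1) / (3 * 2 ^ n) : ℝ) : Circle1)}

/-- `p` is an endpoint of an arc of the Basilica lamination. -/
def IsArcEndpoint (p : Circle1) : Prop :=
  ∃ (k : ℤ) (n : ℕ),
    p = (((3 * (k : ℝ) - 1) / (3 * 2 ^ n) : ℝ) : Circle1) ∨
    p = (((3 * (k : ℝ) + 1) / (3 * 2 ^ n) : ℝ) : Circle1)

/-- `f` preserves the Basilica lamination. -/
def PreservesLamination (f : Equiv.Perm Circle1) : Prop :=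
  ∀ a b : Circle1, IsArc a b ↔ IsArc (f a) (f b)

/-- Membership in `T_B`: a PL homeomorphism of the circle that preserves the Basilica
lamination and all of whose breakpoints are arc endpoints. -/
def MemTB (f : Equiv.Perm Circle1) : Prop :=
  IsPLHomeo f ∧ PreservesLamination f ∧ ∀ p : Circle1, IsBreakpoint f p → IsArcEndpoint p

namespace TBaux

/-- Dyadic rationals (as reals). -/
def Dyadic (x : ℝ) : Prop := ∃ (M : ℤ) (P : ℕ), x = (M : ℝ) / 2 ^ P

lemma Dyadic.add {x y : ℝ} (hx : Dyadic x) (hy : Dyadic y) : Dyadic (x + y) := by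
  obtain ⟨M, P, rfl⟩ := hx; obtain ⟨N, Q, rfl⟩ := hy
  refine ⟨M * 2 ^ Q + N * 2 ^ P, P + Q, ?_⟩
  have hP : ((2 : ℝ) ^ P) ≠ 0 := by positivity
  have hQ : ((2 : ℝ) ^ Q) ≠ 0 := by positivity
  rw [div_add_div _ _ hP hQ, pow_add]
  push_cast
  ring_nf

lemma Dyadic.neg {x : ℝ} (hx : Dyadic x) : Dyadic (-x) := by
  obtain ⟨M, P, rfl⟩ := hx
  exact ⟨-M, P, by push_cast; ring⟩

lemma Dyadic.sub {x y : ℝ} (hx : Dyadic x) (hy : Dyadic y) : Dyadic (x - y) := by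
  rw [sub_eq_add_neg]; exact hx.add hy.neg

lemma Dyadic.intCast (z : ℤ) : Dyadic (z : ℝ) := ⟨z, 0, by simp⟩

lemma Dyadic.int_div_pow (z : ℤ) (m : ℕ) : Dyadic ((z : ℝ) / 2 ^ m) := ⟨z, m, rfl⟩

lemma Dyadic.int_mul_zpow (z : ℤ) (w : ℤ) : Dyadic ((z : ℝ) * 2 ^ w) := by
  rcases le_or_gt 0 w with h | h
  · refine ⟨z * 2 ^ w.toNat, 0, ?_⟩
    push_cast
    rw [← zpow_natCast (2 : ℝ) w.toNat, Int.toNat_of_nonneg h]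
    simp
  · refine ⟨z, (-w).toNat, ?_⟩
    have : ((-w).toNat : ℤ) = -w := Int.toNat_of_nonneg (by omega)
    rw [← zpow_natCast (2 : ℝ) (-w).toNat, this, zpow_neg, div_eq_mul_inv, inv_inv]

lemma coe_eq_coe_iff {x y : ℝ} : (x : Circle1) = (y : Circle1) ↔ ∃ L : ℤ, x = y + L := by
  constructor
  · intro h
    have h' : x - y ∈ AddSubgroup.zmultiples (1 : ℝ) :=
      (QuotientAddGroup.eq_iff_sub_mem).mp h
    obtain ⟨L, hL⟩ := AddSubgroup.mem_zmultiples_iff.mp h'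
    refine ⟨L, ?_⟩
    rw [zsmul_eq_mul, mul_one] at hL
    linarith
  · rintro ⟨L, rfl⟩
    refine (QuotientAddGroup.eq_iff_sub_mem).mpr ?_
    refine AddSubgroup.mem_zmultiples_iff.mpr ⟨L, ?_⟩
    rw [zsmul_eq_mul, mul_one]
    ring

/-- Existence of an arc at scale `n` inside `[u,v]`, provided the interval is long enough. -/
lemma exists_k (u v : ℝ) (n : ℕ) (h5 : 5 ≤ 3 * 2 ^ n * (v - u)) :
    ∃ k : ℤ, u ≤ (3 * (k : ℝ) - 1) / (3 * 2 ^ n) ∧ (3 * (k : ℝ) + 1) / (3 * 2 ^ n) ≤ v := by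
  have hs0 : (0 : ℝ) < 3 * 2 ^ n := by positivity
  set s : ℝ := 3 * 2 ^ n with hs
  refine ⟨⌈(s * u + 1) / 3⌉, ?_, ?_⟩
  · rw [le_div_iff₀ hs0]
    have h1 : (s * u + 1) / 3 ≤ (⌈(s * u + 1) / 3⌉ : ℝ) := Int.le_ceil _
    nlinarith
  · rw [div_le_iff₀ hs0]
    have h1 : (⌈(s * u + 1) / 3⌉ : ℝ) < (s * u + 1) / 3 + 1 := Int.ceil_lt_add_one _
    nlinarith

/-- The key consequence of lamination preservation applied to one arc lying in the
interval of linearity. -/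
lemma level (f : Equiv.Perm Circle1) (hpres : PreservesLamination f)
    (F : ℝ → ℝ) (hind : InducedBy f F)
    (a b u v : ℝ) (hab : ∀ x ∈ Set.Icc u v, F x = a * x + b)
    (ha : 0 < a) (n : ℕ) (k : ℤ)
    (hp : (3 * (k : ℝ) - 1) / (3 * 2 ^ n) ∈ Set.Icc u v)
    (hq : (3 * (k : ℝ) + 1) / (3 * 2 ^ n) ∈ Set.Icc u v)
    (hsmall : a * (2 / (3 * 2 ^ n)) < 1) :
    ∃ (m : ℕ) (k' L : ℤ) (ε : ℝ), (ε = 1 ∨ ε = -1) ∧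
      a * (2 / (3 * 2 ^ n)) = (1 + ε) / 2 - ε * (2 / (3 * 2 ^ m)) ∧
      a * ((3 * (k : ℝ) - 1) / (3 * 2 ^ n)) + b = (3 * (k' : ℝ) + ε) / (3 * 2 ^ m) + L := by
  set p : ℝ := (3 * (k : ℝ) - 1) / (3 * 2 ^ n) with hpdef
  set q : ℝ := (3 * (k : ℝ) + 1) / (3 * 2 ^ n) with hqdef
  have harc : IsArc (p : Circle1) (q : Circle1) := ⟨k, n, rfl⟩
  have harc2 := (hpres _ _).mp harc
  rw [hind p, hind q] at harc2
  obtain ⟨k', m, hset⟩ := harc2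
  rw [Set.pair_eq_pair_iff] at hset
  have h2n : (0 : ℝ) < 3 * 2 ^ n := by positivity
  have h2m : (0 : ℝ) < 3 * 2 ^ m := by positivity
  have h2m1 : (1 : ℝ) ≤ 2 ^ m := one_le_pow₀ (by norm_num)
  have hFp : F p = a * p + b := hab p hp
  have hFq : F q = a * q + b := hab q hq
  have hqp : q - p = 2 / (3 * 2 ^ n) := by
    rw [hpdef, hqdef]; field_simp; ring
  have hdiffpos : 0 < a * (2 / (3 * 2 ^ n)) := by positivity
  have hmlt : 2 / (3 * (2:ℝ) ^ m) ≤ 2 / 3 := by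
    apply div_le_div_of_nonneg_left (by norm_num) (by norm_num)
    nlinarith
  have hmpos : 0 < 2 / (3 * (2:ℝ) ^ m) := by positivity
  rcases hset with ⟨h1, h2⟩ | ⟨h1, h2⟩
  · -- F p ≡ (3k'-1)/(3·2^m), F q ≡ (3k'+1)/(3·2^m)
    obtain ⟨L₁, hL₁⟩ := coe_eq_coe_iff.mp h1
    obtain ⟨L₂, hL₂⟩ := coe_eq_coe_iff.mp h2
    have hdiff : a * (2 / (3 * 2 ^ n)) = 2 / (3 * 2 ^ m) + ((L₂ : ℝ) - L₁) := by
      have : F q - F p = a * (q - p) := by rw [hFp, hFq]; ring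
      rw [hqp] at this
      rw [← this, hL₁, hL₂]
      field_simp
      ring
    have hL0 : L₂ - L₁ = 0 := by
      have lo : (-1 : ℝ) < ((L₂ : ℝ) - L₁) := by linarith
      have hi : ((L₂ : ℝ) - L₁) < 1 := by linarith
      have lo' : (-1 : ℤ) < L₂ - L₁ := by exact_mod_cast (by push_cast; linarith : ((-1:ℤ) : ℝ) < ((L₂ - L₁ : ℤ) : ℝ))
      have hi' : L₂ - L₁ < 1 := by exact_mod_cast (by push_cast; linarith : (((L₂ - L₁ : ℤ)) : ℝ) < ((1:ℤ) : ℝ))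
      omega
    have hL0' : (L₂ : ℝ) - L₁ = 0 := by
      have : ((L₂ - L₁ : ℤ) : ℝ) = 0 := by rw [hL0]; simp
      push_cast at this; linarith
    refine ⟨m, k', L₁, -1, Or.inr rfl, ?_, ?_⟩
    · rw [hdiff, hL0']; ring
    · rw [← hFp, hL₁]
      ring_nf
  · -- F p ≡ (3k'+1)/(3·2^m), F q ≡ (3k'-1)/(3·2^m)
    obtain ⟨L₁, hL₁⟩ := coe_eq_coe_iff.mp h1
    obtain ⟨L₂, hL₂⟩ := coe_eq_coe_iff.mp h2
    have hdiff : a * (2 / (3 * 2 ^ n)) = -(2 / (3 * 2 ^ m)) + ((L₂ : ℝ) - L₁) := by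
      have : F q - F p = a * (q - p) := by rw [hFp, hFq]; ring
      rw [hqp] at this
      rw [← this, hL₁, hL₂]
      field_simp
      ring
    have hL0 : L₂ - L₁ = 1 := by
      have lo : (0 : ℝ) < ((L₂ : ℝ) - L₁) := by linarith
      have hi : ((L₂ : ℝ) - L₁) < 2 := by linarith
      have lo' : (0 : ℤ) < L₂ - L₁ := by exact_mod_cast (by push_cast; linarith : ((0:ℤ) : ℝ) < ((L₂ - L₁ : ℤ) : ℝ))
      have hi' : L₂ - L₁ < 2 := by exact_mod_cast (by push_cast; linarith : (((L₂ - L₁ : ℤ)) : ℝ) < ((2:ℤ) : ℝ))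
      omega
    have hL0' : (L₂ : ℝ) - L₁ = 1 := by
      have : ((L₂ - L₁ : ℤ) : ℝ) = 1 := by rw [hL0]; simp
      push_cast at this; linarith
    refine ⟨m, k', L₁, 1, Or.inl rfl, ?_, ?_⟩
    · rw [hdiff, hL0']; ring
    · rw [← hFp, hL₁]

/-- From the level equation (in the non-exceptional cases), the slope is a power of 2. -/
lemma slope_pow (a : ℝ) (n m : ℕ) (ε : ℝ) (hε : ε = 1 ∨ ε = -1)
    (heq : a * (2 / (3 * 2 ^ n)) = (1 + ε) / 2 - ε * (2 / (3 * 2 ^ m)))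
    (hgood : ε = -1 ∨ m ≤ 1) : ∃ j : ℤ, a = (2 : ℝ) ^ j := by
  have h2n : ((2 : ℝ) ^ n) ≠ 0 := by positivity
  have h2m : ((2 : ℝ) ^ m) ≠ 0 := by positivity
  rcases hgood with rfl | hm
  · -- a = 2^(n-m)
    refine ⟨(n : ℤ) - m, ?_⟩
    have hz : (2 : ℝ) ^ ((n : ℤ) - m) = 2 ^ n / 2 ^ m := by
      rw [zpow_sub₀ (by norm_num : (2:ℝ) ≠ 0), zpow_natCast, zpow_natCast]
    rw [hz]
    have heq' : a * (2 / (3 * 2 ^ n)) = 2 / (3 * 2 ^ m) := by rw [heq]; ring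
    field_simp at heq' ⊢
    linarith
  · rcases hε with rfl | rfl
    · interval_cases m
      · -- a * (2/(3·2^n)) = 1 - 2/3 = 1/3 ⇒ a = 2^n/2
        refine ⟨(n : ℤ) - 1, ?_⟩
        have hz : (2 : ℝ) ^ ((n : ℤ) - 1) = 2 ^ n / 2 := by
          rw [zpow_sub₀ (by norm_num : (2:ℝ) ≠ 0), zpow_natCast, zpow_one]
        rw [hz]
        norm_num at heq
        field_simp at heq ⊢
        linarith
      · -- a * (2/(3·2^n)) = 1 - 1/3 = 2/3 ⇒ a = 2^n
        refine ⟨(n : ℤ), ?_⟩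
        rw [zpow_natCast]
        norm_num at heq
        field_simp at heq ⊢
        linarith
    · -- ε = -1 again
      refine ⟨(n : ℤ) - m, ?_⟩
      have hz : (2 : ℝ) ^ ((n : ℤ) - m) = 2 ^ n / 2 ^ m := by
        rw [zpow_sub₀ (by norm_num : (2:ℝ) ≠ 0), zpow_natCast, zpow_natCast]
      rw [hz]
      have heq' : a * (2 / (3 * 2 ^ n)) = 2 / (3 * 2 ^ m) := by rw [heq]; ring
      field_simp at heq' ⊢
      linarith

/-- The exceptional case cannot happen at two consecutive scales. -/
lemma not_both_bad (a : ℝ) (n m₁ m₂ : ℕ) (h₁ : 2 ≤ m₁) (h₂ : 2 ≤ m₂)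
    (e₁ : a * (2 / (3 * 2 ^ n)) = 1 - 2 / (3 * 2 ^ m₁))
    (e₂ : a * (2 / (3 * 2 ^ (n + 1))) = 1 - 2 / (3 * 2 ^ m₂)) : False := by
  have hA : (0 : ℝ) < 2 ^ n := by positivity
  have hX4 : (4 : ℝ) ≤ 2 ^ m₁ := by
    calc (4 : ℝ) = 2 ^ 2 := by norm_num
    _ ≤ 2 ^ m₁ := pow_le_pow_right₀ (by norm_num) h₁
  have hY4 : (4 : ℝ) ≤ 2 ^ m₂ := by
    calc (4 : ℝ) = 2 ^ 2 := by norm_num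
    _ ≤ 2 ^ m₂ := pow_le_pow_right₀ (by norm_num) h₂
  have hX : (0 : ℝ) < 2 ^ m₁ := by positivity
  have hY : (0 : ℝ) < 2 ^ m₂ := by positivity
  -- a = 3·2^n/2 − 2^n/2^m₁  and  a = 3·2^n − 2^(n+1)/2^m₂
  have ha1 : a = 3 * 2 ^ n / 2 - 2 ^ n / 2 ^ m₁ := by
    have h1 : a = a * (2 / (3 * 2 ^ n)) * (3 * 2 ^ n / 2) := by field_simp
    rw [e₁] at h1
    rw [h1]
    field_simp
  have ha2 : a = 3 * 2 ^ n - 2 ^ (n + 1) / 2 ^ m₂ := by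
    have h2n1 : ((2:ℝ) ^ (n + 1)) = 2 * 2 ^ n := by rw [pow_succ]; ring
    have h1 : a = a * (2 / (3 * 2 ^ (n + 1))) * (3 * 2 ^ (n + 1) / 2) := by
      have : ((2:ℝ) ^ (n+1)) ≠ 0 := by positivity
      field_simp
    rw [e₂] at h1
    rw [h1, h2n1]
    field_simp
  have hb1 : a ≤ 3 * 2 ^ n / 2 := by
    rw [ha1]
    have : (0:ℝ) < 2 ^ n / 2 ^ m₁ := by positivity
    linarith
  have hb2 : 3 * 2 ^ n / 2 < a := by
    rw [ha2]
    have h2 : (2:ℝ) ^ (n + 1) = 2 * 2 ^ n := by rw [pow_succ]; ring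
    have h1 : (2:ℝ) ^ (n + 1) / 2 ^ m₂ ≤ 2 * 2 ^ n / 4 := by
      rw [h2, div_le_div_iff₀ hY (by norm_num)]
      nlinarith
    rw [h2]
    rw [h2] at h1
    linarith
  linarith

end TBaux

open TBaux in
/-- On each interval of linearity, an element of `T_B` is given by `θ ↦ 2ʲ·θ + d (mod 1)`
for some integer `j` and dyadic rational `d = m/2^p`. -/
theorem TB_segments_dyadic (f : Equiv.Perm Circle1) (hf : MemTB f)
    (F : ℝ → ℝ) (hF : IsPLLift F) (hind : InducedBy f F)
    (u v : ℝ) (huv : u < v) (haff : AffineOn F u v) :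
    ∃ (j m p : ℤ), ∀ x ∈ Set.Icc u v, F x = (2 : ℝ) ^ j * x + (m : ℝ) / 2 ^ p := by
  obtain ⟨a, b, hab⟩ := haff
  obtain ⟨-, hmono, -, -⟩ := hF
  have hvu : (0 : ℝ) < v - u := sub_pos.mpr huv
  have ha : 0 < a := by
    have h1 : F u = a * u + b := hab u ⟨le_refl u, le_of_lt huv⟩
    have h2 : F v = a * v + b := hab v ⟨le_of_lt huv, le_refl v⟩
    have h3 := hmono huv
    nlinarith
  obtain ⟨N, hN⟩ := pow_unbounded_of_one_lt
    (y := (2:ℝ)) (max (5 / (3 * (v - u))) (2 * a / 3)) (by norm_num)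
  have hlen : ∀ M : ℕ, N ≤ M → 5 ≤ 3 * 2 ^ M * (v - u) := by
    intro M hNM
    have hmono2 : (2:ℝ) ^ N ≤ 2 ^ M := pow_le_pow_right₀ (by norm_num) hNM
    have h5 : 5 / (3 * (v - u)) < (2:ℝ) ^ M :=
      lt_of_lt_of_le (lt_of_le_of_lt (le_max_left _ _) hN) hmono2
    rw [div_lt_iff₀ (by positivity)] at h5
    nlinarith
  have hsm : ∀ M : ℕ, N ≤ M → a * (2 / (3 * 2 ^ M)) < 1 := by
    intro M hNM
    have hmono2 : (2:ℝ) ^ N ≤ 2 ^ M := pow_le_pow_right₀ (by norm_num) hNM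
    have h5 : 2 * a / 3 < (2:ℝ) ^ M :=
      lt_of_lt_of_le (lt_of_le_of_lt (le_max_right _ _) hN) hmono2
    have h2M : (0:ℝ) < 2 ^ M := by positivity
    have key : a * (2 / (3 * 2 ^ M)) = (2 * a / 3) / 2 ^ M := by
      field_simp
    rw [key, div_lt_one h2M]
    exact h5
  -- arcs at scales N and N+1
  obtain ⟨k₁, hk₁u, hk₁v⟩ := exists_k u v N (hlen N le_rfl)
  obtain ⟨k₂, hk₂u, hk₂v⟩ := exists_k u v (N + 1) (hlen (N + 1) (Nat.le_succ N))
  have hpq₁ : (3 * (k₁:ℝ) - 1) / (3 * 2 ^ N) ≤ (3 * (k₁:ℝ) + 1) / (3 * 2 ^ N) :=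
    (div_le_div_iff_of_pos_right (by positivity)).mpr (by linarith)
  have hpq₂ : (3 * (k₂:ℝ) - 1) / (3 * 2 ^ (N + 1)) ≤ (3 * (k₂:ℝ) + 1) / (3 * 2 ^ (N + 1)) :=
    (div_le_div_iff_of_pos_right (by positivity)).mpr (by linarith)
  have hp₁ : (3 * (k₁:ℝ) - 1) / (3 * 2 ^ N) ∈ Set.Icc u v := ⟨hk₁u, le_trans hpq₁ hk₁v⟩
  have hq₁ : (3 * (k₁:ℝ) + 1) / (3 * 2 ^ N) ∈ Set.Icc u v := ⟨le_trans hk₁u hpq₁, hk₁v⟩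
  have hp₂ : (3 * (k₂:ℝ) - 1) / (3 * 2 ^ (N + 1)) ∈ Set.Icc u v := ⟨hk₂u, le_trans hpq₂ hk₂v⟩
  have hq₂ : (3 * (k₂:ℝ) + 1) / (3 * 2 ^ (N + 1)) ∈ Set.Icc u v := ⟨le_trans hk₂u hpq₂, hk₂v⟩
  obtain ⟨m₁, k₁', L₁, ε₁, hε₁, heq₁, hpt₁⟩ :=
    level f hf.2.1 F hind a b u v hab ha N k₁ hp₁ hq₁ (hsm N le_rfl)
  obtain ⟨m₂, k₂', L₂, ε₂, hε₂, heq₂, hpt₂⟩ :=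
    level f hf.2.1 F hind a b u v hab ha (N + 1) k₂ hp₂ hq₂ (hsm (N + 1) (Nat.le_succ N))
  -- the slope is a power of 2
  have hj : ∃ j : ℤ, a = (2:ℝ) ^ j := by
    by_cases hg1 : ε₁ = -1 ∨ m₁ ≤ 1
    · exact slope_pow a N m₁ ε₁ hε₁ heq₁ hg1
    · by_cases hg2 : ε₂ = -1 ∨ m₂ ≤ 1
      · exact slope_pow a (N + 1) m₂ ε₂ hε₂ heq₂ hg2
      · exfalso
        push_neg at hg1 hg2
        have hε₁1 : ε₁ = 1 := hε₁.resolve_right hg1.1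
        have hε₂1 : ε₂ = 1 := hε₂.resolve_right hg2.1
        rw [hε₁1] at heq₁
        rw [hε₂1] at heq₂
        exact not_both_bad a N m₁ m₂ (by omega) (by omega)
          (by linarith [heq₁]) (by linarith [heq₂])
  obtain ⟨j, haj⟩ := hj
  -- the offset is dyadic
  set W : ℝ := (2:ℝ) ^ (j - (N : ℤ)) with hWdef
  have hW : a = W * 2 ^ N := by
    have h1 : W * 2 ^ N = (2:ℝ) ^ (j - (N : ℤ) + N) := by
      rw [← zpow_natCast (2:ℝ) N, ← zpow_add₀ (by norm_num : (2:ℝ) ≠ 0)]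
    rw [haj, h1, sub_add_cancel]
  have h2N : ((2:ℝ) ^ N) ≠ 0 := by positivity
  have h2m : ((2:ℝ) ^ m₁) ≠ 0 := by positivity
  rw [hW] at heq₁ hpt₁
  have hA1 : W * 2 ^ N * (2 / (3 * 2 ^ N)) = 2 * W / 3 := by field_simp
  have hA2 : W * 2 ^ N * ((3 * (k₁:ℝ) - 1) / (3 * 2 ^ N)) = (3 * (k₁:ℝ) - 1) * W / 3 := by
    field_simp
  rw [hA1] at heq₁
  rw [hA2] at hpt₁
  have hs1 : (3 * (k₁':ℝ) + ε₁) / (3 * 2 ^ m₁) = (k₁':ℝ) / 2 ^ m₁ + ε₁ * (2 / (3 * 2 ^ m₁)) / 2 := by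
    field_simp
  have hs2 : (3 * (k₁:ℝ) - 1) * W / 3 = (k₁:ℝ) * W - W / 3 := by ring
  rw [hs1, hs2] at hpt₁
  have hb : b = (L₁:ℝ) + (k₁':ℝ) / 2 ^ m₁ - (k₁:ℝ) * W + (1 + ε₁) / 4 := by
    linarith [heq₁, hpt₁]
  have hdy : Dyadic b := by
    rw [hb]
    have d1 : Dyadic ((L₁:ℝ)) := Dyadic.intCast L₁
    have d2 : Dyadic ((k₁':ℝ) / 2 ^ m₁) := Dyadic.int_div_pow k₁' m₁
    have d3 : Dyadic ((k₁:ℝ) * W) := Dyadic.int_mul_zpow k₁ _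
    have d4 : Dyadic ((1 + ε₁) / 4) := by
      rcases hε₁ with rfl | rfl
      · exact ⟨1, 1, by norm_num⟩
      · exact ⟨0, 0, by norm_num⟩
    exact ((d1.add d2).sub d3).add d4
  obtain ⟨M, P, hMP⟩ := hdy
  refine ⟨j, M, (P : ℤ), fun x hx => ?_⟩
  rw [hab x hx, haj, hMP, zpow_natCast]
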